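/- Let ρ, κ ∈ ℝ and σ > 0, and define R(t) = 2·arctan_κ(σ·tan_ρ(t/2)). Then for every t > 0 such that t < π/√ρ when ρ > 0 and such that σ·tan_ρ(t/2) < 1/√(−κ) when κ < 0, the function R is differentiable at t and satisfies R′(t) = sin_κ(R(t))/sin_ρ(t); moreover R(t)/t → σ as t → 0⁺. (Thus R is the distance function of the conformal azimuthal map from a ball in the model space of curvature ρ to the model space of curvature κ with radial derivative σ at the center.) -/

import Mathlib

open Real MeasureTheory Filter Asymptotics

/-- Inverse hyperbolic tangent. -/
noncomputable def artanh (y : ℝ) : ℝ := Real.log ((1 + y) / (1 - y)) / 2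

/-- The generalized sine function `sin_κ`. -/
noncomputable def sinK (κ t : ℝ) : ℝ :=
  if 0 < κ then Real.sin (Real.sqrt κ * t) / Real.sqrt κ
  else if κ < 0 then Real.sinh (Real.sqrt (-κ) * t) / Real.sqrt (-κ)
  else t

/-- The generalized cosine function `cos_κ = sin_κ'`. -/
noncomputable def cosK (κ t : ℝ) : ℝ :=
  if 0 < κ then Real.cos (Real.sqrt κ * t)
  else if κ < 0 then Real.cosh (Real.sqrt (-κ) * t)
  else 1

/-- The generalized tangent function `tan_κ`. -/
noncomputable def tanK (κ t : ℝ) : ℝ := sinK κ t / cosK κ t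

/-- The inverse function `arctan_κ` of `tan_κ`. -/
noncomputable def arctanK (κ x : ℝ) : ℝ :=
  if 0 < κ then Real.arctan (Real.sqrt κ * x) / Real.sqrt κ
  else if κ < 0 then _root_.artanh (Real.sqrt (-κ) * x) / Real.sqrt (-κ)
  else x

/-- `ω_{n-1}`, the (n-1)-volume of the unit sphere of ℝⁿ, i.e. `n` times the
volume of the unit ball. -/
noncomputable def omegaS (n : ℕ) : ℝ :=
  n * (volume (Metric.ball (0 : EuclideanSpace ℝ (Fin n)) 1)).toReal

/-- `A_κ(t)`: the volume of a geodesic sphere of radius `t` in the model space. -/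
noncomputable def AK (n : ℕ) (κ t : ℝ) : ℝ := omegaS n * sinK κ t ^ (n - 1)

/-- `V_κ(t)`: the volume of a geodesic ball of radius `t` in the model space. -/
noncomputable def VK (n : ℕ) (κ t : ℝ) : ℝ := omegaS n * ∫ s in (0:ℝ)..t, sinK κ s ^ (n - 1)

/-- The natural domain of `V_κ`: `[0, π/√κ)` when `κ > 0` and `[0, ∞)` otherwise. -/
noncomputable def domK (κ : ℝ) : Set ℝ :=
  if 0 < κ then Set.Ico 0 (Real.pi / Real.sqrt κ) else Set.Ici 0

/-- The range of `V_κ` (on its natural domain). -/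
noncomputable def rangeVK (n : ℕ) (κ : ℝ) : Set ℝ := VK n κ '' domK κ

/-- The inverse of `V_κ` on its natural domain. -/
noncomputable def VKinv (n : ℕ) (κ v : ℝ) : ℝ := sInf {t : ℝ | t ∈ domK κ ∧ VK n κ t = v}

/-- The isoperimetric profile `I_κ = A_κ ∘ V_κ⁻¹` of the model space. -/
noncomputable def IK (n : ℕ) (κ v : ℝ) : ℝ := AK n κ (VKinv n κ v)
lemma my_sinK_zero (κ : ℝ) : sinK κ 0 = 0 := by
  unfold sinK; split_ifs <;> simp

lemma my_tanK_zero (ρ : ℝ) : tanK ρ 0 = 0 := by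
  simp [tanK, my_sinK_zero]

lemma my_cosK_zero (κ : ℝ) : cosK κ 0 = 1 := by
  unfold cosK; split_ifs <;> simp

lemma my_arctanK_zero (κ : ℝ) : arctanK κ 0 = 0 := by
  unfold arctanK _root_.artanh; split_ifs <;> simp

lemma my_hasDerivAt_sinK (κ t : ℝ) : HasDerivAt (sinK κ) (cosK κ t) t := by
  unfold sinK cosK
  split_ifs with h1 h2
  · have hs : Real.sqrt κ ≠ 0 := ne_of_gt (Real.sqrt_pos.mpr h1)
    have H : HasDerivAt (fun s : ℝ => Real.sin (Real.sqrt κ * s) / Real.sqrt κ)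
        ((Real.cos (Real.sqrt κ * t) * (Real.sqrt κ * 1)) / Real.sqrt κ) t :=
      (((Real.hasDerivAt_sin (Real.sqrt κ * t)).comp t
        ((hasDerivAt_id t).const_mul (Real.sqrt κ)))).div_const (Real.sqrt κ)
    convert H using 1
    field_simp
  · have hs : Real.sqrt (-κ) ≠ 0 := ne_of_gt (Real.sqrt_pos.mpr (by linarith))
    have H : HasDerivAt (fun s : ℝ => Real.sinh (Real.sqrt (-κ) * s) / Real.sqrt (-κ))
        ((Real.cosh (Real.sqrt (-κ) * t) * (Real.sqrt (-κ) * 1)) / Real.sqrt (-κ)) t :=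
      (((Real.hasDerivAt_sinh (Real.sqrt (-κ) * t)).comp t
        ((hasDerivAt_id t).const_mul (Real.sqrt (-κ))))).div_const (Real.sqrt (-κ))
    convert H using 1
    field_simp
  · exact hasDerivAt_id t

lemma my_hasDerivAt_cosK (κ t : ℝ) : HasDerivAt (fun s => cosK κ s) (-(κ * sinK κ t)) t := by
  unfold sinK cosK
  split_ifs with h1 h2
  · have hs : Real.sqrt κ ≠ 0 := ne_of_gt (Real.sqrt_pos.mpr h1)
    have H : HasDerivAt (fun s : ℝ => Real.cos (Real.sqrt κ * s))
        (-Real.sin (Real.sqrt κ * t) * (Real.sqrt κ * 1)) t :=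
      (Real.hasDerivAt_cos (Real.sqrt κ * t)).comp t
        ((hasDerivAt_id t).const_mul (Real.sqrt κ))
    convert H using 1
    have hs2 : Real.sqrt κ ^ 2 = κ := Real.sq_sqrt h1.le
    field_simp
    linear_combination -Real.sin (Real.sqrt κ * t) * hs2.symm
  · have hs : Real.sqrt (-κ) ≠ 0 := ne_of_gt (Real.sqrt_pos.mpr (by linarith))
    have H : HasDerivAt (fun s : ℝ => Real.cosh (Real.sqrt (-κ) * s))
        (Real.sinh (Real.sqrt (-κ) * t) * (Real.sqrt (-κ) * 1)) t :=
      (Real.hasDerivAt_cosh (Real.sqrt (-κ) * t)).comp t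
        ((hasDerivAt_id t).const_mul (Real.sqrt (-κ)))
    convert H using 1
    have hs2 : Real.sqrt (-κ) ^ 2 = -κ := Real.sq_sqrt (by linarith)
    field_simp
    linear_combination Real.sinh (Real.sqrt (-κ) * t) * hs2.symm
  · have : κ = 0 := le_antisymm (not_lt.mp h1) (not_lt.mp h2)
    simp only [this, zero_mul, neg_zero]
    exact hasDerivAt_const t 1

lemma my_cosK_sq (κ t : ℝ) : cosK κ t ^ 2 + κ * sinK κ t ^ 2 = 1 := by
  unfold sinK cosK
  split_ifs with h1 h2
  · have hs : Real.sqrt κ ^ 2 = κ := Real.sq_sqrt h1.le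
    have := Real.sin_sq_add_cos_sq (Real.sqrt κ * t)
    have hκ : κ ≠ 0 := ne_of_gt h1
    field_simp [hs]
    linear_combination κ * this + (Real.cos (Real.sqrt κ * t) ^ 2 - 1) * hs
  · have hs : Real.sqrt (-κ) ^ 2 = -κ := Real.sq_sqrt (by linarith)
    have := Real.cosh_sq_sub_sinh_sq (Real.sqrt (-κ) * t)
    have hκ : -κ ≠ 0 := ne_of_gt (by linarith)
    field_simp [hs]
    have hk : κ * (Real.sqrt (-κ))⁻¹ ^ 2 = -1 := by
      rw [inv_pow, hs, mul_inv_eq_iff_eq_mul₀ hκ]; ring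
    linear_combination this + Real.sinh (Real.sqrt (-κ) * t) ^ 2 * hk
  · have : κ = 0 := le_antisymm (not_lt.mp h1) (not_lt.mp h2)
    simp [this]

lemma my_hasDerivAt_tanK (ρ t : ℝ) (hc : cosK ρ t ≠ 0) :
    HasDerivAt (fun s => tanK ρ s) (1 + ρ * tanK ρ t ^ 2) t := by
  have H := (my_hasDerivAt_sinK ρ t).div (my_hasDerivAt_cosK ρ t) hc
  have heq : (cosK ρ t * cosK ρ t - sinK ρ t * -(ρ * sinK ρ t)) / cosK ρ t ^ 2
      = 1 + ρ * tanK ρ t ^ 2 := by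
    unfold tanK
    have h3 := my_cosK_sq ρ t
    field_simp
    ring
  rw [heq] at H
  exact H

lemma my_hasDerivAt_artanh (y : ℝ) (hy : |y| < 1) :
    HasDerivAt _root_.artanh (1 / (1 - y ^ 2)) y := by
  have h1 : -1 < y := neg_lt_of_abs_lt hy
  have h2 : y < 1 := lt_of_abs_lt hy
  have hmem : y ∈ Set.Ioo (-1 : ℝ) 1 := ⟨h1, h2⟩
  have hopen : IsOpen (Set.Ioo (-1 : ℝ) 1) := isOpen_Ioo
  have heq : ∀ z ∈ Set.Ioo (-1 : ℝ) 1,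
      _root_.artanh z = (Real.log (1 + z) - Real.log (1 - z)) / 2 := by
    intro z hz
    unfold _root_.artanh
    rw [Real.log_div (by nlinarith [hz.1]) (by nlinarith [hz.2])]
  have hg : HasDerivAt (fun z => (Real.log (1 + z) - Real.log (1 - z)) / 2)
      (1 / (1 - y ^ 2)) y := by
    have hA : HasDerivAt (fun z : ℝ => Real.log (1 + z)) (1 + y)⁻¹ y := by
      have := (Real.hasDerivAt_log (x := 1 + y) (by linarith)).comp y
        ((hasDerivAt_const y (1:ℝ)).add (hasDerivAt_id y))
      simpa [Function.comp_def] using this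
    have hB : HasDerivAt (fun z : ℝ => Real.log (1 - z)) (-(1 - y)⁻¹) y := by
      have := (Real.hasDerivAt_log (x := 1 - y) (by linarith)).comp y
        ((hasDerivAt_const y (1:ℝ)).sub (hasDerivAt_id y))
      simpa [Function.comp_def] using this
    have := (hA.sub hB).div_const 2
    refine this.congr_deriv ?_
    have hn1 : (1 : ℝ) + y ≠ 0 := by linarith
    have hn2 : (1 : ℝ) - y ≠ 0 := by linarith
    have hn3 : (1 : ℝ) - y ^ 2 ≠ 0 := by nlinarith
    field_simp
    ring
  exact hg.congr_of_eventuallyEq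
    (Filter.eventuallyEq_of_mem (hopen.mem_nhds hmem) heq) |>.congr_deriv rfl

lemma my_hasDerivAt_arctanK (κ x : ℝ) (hκ : κ < 0 → |Real.sqrt (-κ) * x| < 1) :
    HasDerivAt (fun y => arctanK κ y) (1 / (1 + κ * x ^ 2)) x := by
  unfold arctanK
  split_ifs with h1 h2
  · have hs : Real.sqrt κ ≠ 0 := ne_of_gt (Real.sqrt_pos.mpr h1)
    have hs2 : Real.sqrt κ ^ 2 = κ := Real.sq_sqrt h1.le
    have H : HasDerivAt (fun y : ℝ => Real.arctan (Real.sqrt κ * y) / Real.sqrt κ)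
        ((1 / (1 + (Real.sqrt κ * x) ^ 2) * (Real.sqrt κ * 1)) / Real.sqrt κ) x :=
      ((Real.hasDerivAt_arctan (Real.sqrt κ * x)).comp x
        ((hasDerivAt_id x).const_mul (Real.sqrt κ))).div_const (Real.sqrt κ)
    convert H using 1
    rw [mul_pow, hs2]
    field_simp
  · have hs : Real.sqrt (-κ) ≠ 0 := ne_of_gt (Real.sqrt_pos.mpr (by linarith))
    have hs2 : Real.sqrt (-κ) ^ 2 = -κ := Real.sq_sqrt (by linarith)
    have H : HasDerivAt (fun y : ℝ => _root_.artanh (Real.sqrt (-κ) * y) / Real.sqrt (-κ))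
        ((1 / (1 - (Real.sqrt (-κ) * x) ^ 2) * (Real.sqrt (-κ) * 1)) / Real.sqrt (-κ)) x :=
      ((my_hasDerivAt_artanh (Real.sqrt (-κ) * x) (hκ h2)).comp x
        ((hasDerivAt_id x).const_mul (Real.sqrt (-κ)))).div_const (Real.sqrt (-κ))
    convert H using 1
    rw [mul_pow, hs2, mul_one, mul_div_assoc, div_self hs, mul_one]
    congr 1
    ring
  · have : κ = 0 := le_antisymm (not_lt.mp h1) (not_lt.mp h2)
    simp only [this, zero_mul, add_zero, div_one]
    exact hasDerivAt_id x

lemma my_one_add_pos (κ u : ℝ) (hκ : κ < 0 → |Real.sqrt (-κ) * u| < 1) :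
    0 < 1 + κ * u ^ 2 := by
  rcases lt_trichotomy κ 0 with h | h | h
  · have h2 := abs_lt.mp (hκ h)
    have hs2 : Real.sqrt (-κ) ^ 2 = -κ := Real.sq_sqrt (by linarith)
    have : (Real.sqrt (-κ) * u) ^ 2 < 1 := by nlinarith [h2.1, h2.2]
    rw [mul_pow, hs2] at this
    nlinarith
  · simp [h]
  · positivity

lemma my_sinh_two_artanh (y : ℝ) (h1 : -1 < y) (h2 : y < 1) :
    Real.sinh (2 * _root_.artanh y) = 2 * y / (1 - y ^ 2) := by
  have hy1 : (0:ℝ) < 1 + y := by linarith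
  have hy2 : (0:ℝ) < 1 - y := by linarith
  have h2a : 2 * _root_.artanh y = Real.log ((1 + y) / (1 - y)) := by unfold _root_.artanh; ring
  rw [h2a, Real.sinh_eq, Real.exp_log (div_pos hy1 hy2), ← Real.log_inv,
    Real.exp_log (by positivity), inv_div]
  have hyne : (1:ℝ) - y ^ 2 ≠ 0 := by nlinarith
  have h1ne : (1:ℝ) + y ≠ 0 := ne_of_gt hy1
  have h2ne : (1:ℝ) - y ≠ 0 := ne_of_gt hy2
  field_simp
  ring

lemma my_sinK_two_arctanK (κ x : ℝ) (hκ : κ < 0 → |Real.sqrt (-κ) * x| < 1) :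
    sinK κ (2 * arctanK κ x) = 2 * x / (1 + κ * x ^ 2) := by
  unfold sinK arctanK
  split_ifs with h1 h2
  · have hs : Real.sqrt κ ≠ 0 := ne_of_gt (Real.sqrt_pos.mpr h1)
    have hs2 : Real.sqrt κ ^ 2 = κ := Real.sq_sqrt h1.le
    have harg : Real.sqrt κ * (2 * (Real.arctan (Real.sqrt κ * x) / Real.sqrt κ))
        = 2 * Real.arctan (Real.sqrt κ * x) := by field_simp
    rw [harg, Real.sin_two_mul, Real.sin_arctan, Real.cos_arctan]
    have hpos : (0:ℝ) < 1 + (Real.sqrt κ * x) ^ 2 := by positivity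
    have hsq : Real.sqrt (1 + (Real.sqrt κ * x) ^ 2) * Real.sqrt (1 + (Real.sqrt κ * x) ^ 2)
        = 1 + (Real.sqrt κ * x) ^ 2 := Real.mul_self_sqrt hpos.le
    have hsqne : Real.sqrt (1 + (Real.sqrt κ * x) ^ 2) ≠ 0 :=
      ne_of_gt (Real.sqrt_pos.mpr hpos)
    have hdne : 1 + κ * x ^ 2 ≠ 0 := by
      have : (Real.sqrt κ * x) ^ 2 = κ * x ^ 2 := by rw [mul_pow, hs2]
      rw [this] at hpos; exact ne_of_gt hpos
    field_simp
    rw [hs2, Real.sq_sqrt (by nlinarith [sq_nonneg x, h1])]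
    ring
  · have hs : Real.sqrt (-κ) ≠ 0 := ne_of_gt (Real.sqrt_pos.mpr (by linarith))
    have hs2 : Real.sqrt (-κ) ^ 2 = -κ := Real.sq_sqrt (by linarith)
    have hyy := abs_lt.mp (hκ h2)
    have harg : Real.sqrt (-κ) * (2 * (_root_.artanh (Real.sqrt (-κ) * x) / Real.sqrt (-κ)))
        = 2 * _root_.artanh (Real.sqrt (-κ) * x) := by field_simp
    rw [harg, my_sinh_two_artanh _ hyy.1 hyy.2, mul_pow, hs2,
      show (1:ℝ) - -κ * x ^ 2 = 1 + κ * x ^ 2 by ring, div_div,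
      mul_comm (1 + κ * x ^ 2) (Real.sqrt (-κ)), ← div_div,
      mul_comm (Real.sqrt (-κ)) x, ← mul_assoc, mul_div_assoc, div_self hs, mul_one]
  · have : κ = 0 := le_antisymm (not_lt.mp h1) (not_lt.mp h2)
    simp [this]

lemma my_sinK_half (ρ t : ℝ) : sinK ρ t = 2 * sinK ρ (t / 2) * cosK ρ (t / 2) := by
  unfold sinK cosK
  split_ifs with h1 h2
  · have hs : Real.sqrt ρ ≠ 0 := ne_of_gt (Real.sqrt_pos.mpr h1)
    have : Real.sqrt ρ * t = 2 * (Real.sqrt ρ * (t / 2)) := by ring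
    rw [this, Real.sin_two_mul]
    field_simp
  · have hs : Real.sqrt (-ρ) ≠ 0 := ne_of_gt (Real.sqrt_pos.mpr (by linarith))
    have : Real.sqrt (-ρ) * t = 2 * (Real.sqrt (-ρ) * (t / 2)) := by ring
    rw [this, Real.sinh_two_mul]
    field_simp
  · ring

lemma my_key (ρ κ σ t : ℝ) (hc : cosK ρ (t/2) ≠ 0)
    (hκ : κ < 0 → |Real.sqrt (-κ) * (σ * tanK ρ (t/2))| < 1) :
    HasDerivAt (fun s : ℝ => 2 * arctanK κ (σ * tanK ρ (s/2)))
      (σ * (1 + ρ * tanK ρ (t/2) ^ 2) / (1 + κ * (σ * tanK ρ (t/2)) ^ 2)) t := by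
  have h1 : HasDerivAt (fun s : ℝ => tanK ρ (s/2)) ((1 + ρ * tanK ρ (t/2) ^ 2) * (1/2)) t :=
    by have := (my_hasDerivAt_tanK ρ (t/2) hc).comp t ((hasDerivAt_id t).div_const 2); exact this
  have h2 : HasDerivAt (fun s : ℝ => σ * tanK ρ (s/2))
      (σ * ((1 + ρ * tanK ρ (t/2) ^ 2) * (1/2))) t := h1.const_mul σ
  have h3 : HasDerivAt (fun s : ℝ => 2 * arctanK κ (σ * tanK ρ (s/2)))
      (2 * (1 / (1 + κ * (σ * tanK ρ (t/2)) ^ 2) * (σ * ((1 + ρ * tanK ρ (t/2) ^ 2) * (1/2))))) t :=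
    by have := (((my_hasDerivAt_arctanK κ (σ * tanK ρ (t/2)) hκ).comp t h2)).const_mul 2; exact this
  convert h3 using 1
  ring

lemma my_cond (ρ t : ℝ) (ht : 0 < t) (hρ : 0 < ρ → t < Real.pi / Real.sqrt ρ) :
    0 < sinK ρ (t/2) ∧ 0 < cosK ρ (t/2) := by
  unfold sinK cosK
  split_ifs with h1 h2
  · have hs : 0 < Real.sqrt ρ := Real.sqrt_pos.mpr h1
    have harg : 0 < Real.sqrt ρ * (t/2) := by positivity
    have hlt : Real.sqrt ρ * (t/2) < Real.pi / 2 := by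
      have h := hρ h1
      rw [lt_div_iff₀ hs] at h
      nlinarith
    constructor
    · exact div_pos (Real.sin_pos_of_pos_of_lt_pi harg
        (by linarith [Real.pi_pos])) hs
    · exact Real.cos_pos_of_mem_Ioo ⟨by linarith [Real.pi_pos], hlt⟩
  · have hs : 0 < Real.sqrt (-ρ) := Real.sqrt_pos.mpr (by linarith)
    exact ⟨div_pos (by positivity) hs, Real.cosh_pos _⟩
  · exact ⟨by linarith, one_pos⟩

/-- The distance function `R(t) = 2·arctan_κ(σ·tan_ρ(t/2))` of the conformal
azimuthal map with radial derivative `σ` at the center: it satisfies the ODE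
`R'(t) = sin_κ(R(t))/sin_ρ(t)` at every admissible `t > 0`, and `R(t)/t → σ`
as `t → 0⁺`. -/
theorem conformal_azimuthal_distance_function (ρ κ σ : ℝ) (hσ : 0 < σ) :
    (∀ t : ℝ, 0 < t → (0 < ρ → t < Real.pi / Real.sqrt ρ) →
      (κ < 0 → σ * tanK ρ (t / 2) < 1 / Real.sqrt (-κ)) →
      HasDerivAt (fun s : ℝ => 2 * arctanK κ (σ * tanK ρ (s / 2)))
        (sinK κ (2 * arctanK κ (σ * tanK ρ (t / 2))) / sinK ρ t) t) ∧
    Filter.Tendsto (fun t : ℝ => 2 * arctanK κ (σ * tanK ρ (t / 2)) / t)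
      (nhdsWithin 0 (Set.Ioi 0)) (nhds σ) := by
  constructor
  · intro t ht htρ htκ
    obtain ⟨hsin, hcos⟩ := my_cond ρ t ht htρ
    have hc : cosK ρ (t/2) ≠ 0 := ne_of_gt hcos
    have hsne : sinK ρ (t/2) ≠ 0 := ne_of_gt hsin
    have htan : 0 < tanK ρ (t/2) := div_pos hsin hcos
    have hu : 0 < σ * tanK ρ (t/2) := mul_pos hσ htan
    have habs : κ < 0 → |Real.sqrt (-κ) * (σ * tanK ρ (t/2))| < 1 := by
      intro h
      have hs : 0 < Real.sqrt (-κ) := Real.sqrt_pos.mpr (by linarith)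
      have hlt := htκ h
      rw [abs_of_pos (mul_pos hs hu)]
      calc Real.sqrt (-κ) * (σ * tanK ρ (t/2))
          < Real.sqrt (-κ) * (1 / Real.sqrt (-κ)) :=
            mul_lt_mul_of_pos_left hlt hs
        _ = 1 := by field_simp
    have H := my_key ρ κ σ t hc habs
    have hd : 0 < 1 + κ * (σ * tanK ρ (t/2)) ^ 2 := my_one_add_pos κ _ habs
    have hdne : 1 + κ * (σ * tanK ρ (t/2)) ^ 2 ≠ 0 := ne_of_gt hd
    have heq : sinK κ (2 * arctanK κ (σ * tanK ρ (t / 2))) / sinK ρ t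
        = σ * (1 + ρ * tanK ρ (t/2) ^ 2) / (1 + κ * (σ * tanK ρ (t/2)) ^ 2) := by
      rw [my_sinK_two_arctanK κ _ habs, my_sinK_half ρ t]
      have hTc : sinK ρ (t/2) = tanK ρ (t/2) * cosK ρ (t/2) := by
        rw [tanK]; field_simp
      have h3 := my_cosK_sq ρ (t/2)
      rw [hTc] at h3
      have hTne : tanK ρ (t/2) ≠ 0 := ne_of_gt htan
      rw [hTc]
      field_simp
      linear_combination
        (-(1 + κ * (σ * tanK ρ (t/2)) ^ 2)⁻¹) * h3
    rw [show t / 2 = t/2 by norm_num] at *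
    rw [heq]
    exact H
  · have hc0 : cosK ρ (0/2) ≠ 0 := by norm_num [my_cosK_zero]
    have habs0 : κ < 0 → |Real.sqrt (-κ) * (σ * tanK ρ (0/2))| < 1 := by
      intro _; norm_num [my_tanK_zero]
    have H := my_key ρ κ σ 0 hc0 habs0
    have hval : σ * (1 + ρ * tanK ρ (0/2) ^ 2) / (1 + κ * (σ * tanK ρ (0/2)) ^ 2) = σ := by
      norm_num [my_tanK_zero]
    rw [hval] at H
    rw [hasDerivAt_iff_tendsto_slope] at H
    have hR0 : 2 * arctanK κ (σ * tanK ρ (0/2)) = 0 := by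
      norm_num [my_tanK_zero, my_arctanK_zero]
    have hsl : slope (fun s : ℝ => 2 * arctanK κ (σ * tanK ρ (s/2))) 0
        = fun b => 2 * arctanK κ (σ * tanK ρ (b/2)) / b := by
      funext b
      rw [slope_def_field, hR0, sub_zero, sub_zero]
    rw [hsl] at H
    exact H.mono_left (nhdsWithin_mono 0 (fun x hx => by simpa using ne_of_gt hx))
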